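/- Let u : ℝ × ℝ → ℝ be smooth (all partial derivatives of all orders exist and are continuous), set m = u − u_{xx} and M = cos(u² − u_x²)·m·u_x, and suppose m_t + ∂ₓ[sin(u² − u_x²)·m] = 0 on ℝ × ℝ. Then for all (t,x): (1 − ∂ₓ²)[u_t + sin(u² − u_x²)·u_x](t,x) = −2·u(t,x)·M(t,x) − 2·∂ₓ(u_x·M)(t,x). -/

import Mathlib

open MeasureTheory Real Set

/-- The convolution `(p*f)(x) = ∫_ℝ (1/2) e^{-|x-y|} f(y) dy` with `p(x) = (1/2)exp(-|x|)`. -/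
noncomputable def pConv (f : ℝ → ℝ) (x : ℝ) : ℝ := ∫ y : ℝ, (1/2) * Real.exp (-|x - y|) * f y

/-- `(p₊*f)(x) = (1/2)∫_{-∞}^{x} e^{y-x} f(y) dy`. -/
noncomputable def pPlus (f : ℝ → ℝ) (x : ℝ) : ℝ := (1/2) * ∫ y in Set.Iic x, Real.exp (y - x) * f y

/-- `(p₋*f)(x) = (1/2)∫_{x}^{∞} e^{x-y} f(y) dy`. -/
noncomputable def pMinus (f : ℝ → ℝ) (x : ℝ) : ℝ := (1/2) * ∫ y in Set.Ici x, Real.exp (x - y) * f y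

/-- Spatial partial derivative `∂ₓ` of a function of `(t, x)`. -/
noncomputable def pdx (f : ℝ → ℝ → ℝ) : ℝ → ℝ → ℝ := fun t x => deriv (fun y => f t y) x

/-- Time partial derivative `∂ₜ` of a function of `(t, x)`. -/
noncomputable def pdt (f : ℝ → ℝ → ℝ) : ℝ → ℝ → ℝ := fun t x => deriv (fun s => f s x) t

/-- The momentum density `m = u - u_{xx}`. -/
noncomputable def mF (u : ℝ → ℝ → ℝ) : ℝ → ℝ → ℝ := fun t x => u t x - pdx (pdx u) t x

/-- The blow-up quantity `M = cos(u² - u_x²) · m · u_x`. -/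
noncomputable def MF (u : ℝ → ℝ → ℝ) : ℝ → ℝ → ℝ :=
  fun t x => Real.cos ((u t x) ^ 2 - (pdx u t x) ^ 2) * mF u t x * pdx u t x


noncomputable def DD (v : ℝ × ℝ) (F : ℝ × ℝ → ℝ) : ℝ × ℝ → ℝ := fun p => fderiv ℝ F p v

lemma cast_le_top' : ((⊤:ℕ∞) : WithTop ℕ∞) + 1 ≤ ((⊤:ℕ∞) : WithTop ℕ∞) := by norm_num
lemma one_le_cast_top : (1 : WithTop ℕ∞) ≤ ((⊤:ℕ∞) : WithTop ℕ∞) := by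
  rw [show (1 : WithTop ℕ∞) = ((1:ℕ∞) : WithTop ℕ∞) from rfl]
  exact WithTop.coe_le_coe.mpr le_top
lemma two_le_cast_top : (2 : WithTop ℕ∞) ≤ ((⊤:ℕ∞) : WithTop ℕ∞) := by
  rw [show (2 : WithTop ℕ∞) = ((2:ℕ∞) : WithTop ℕ∞) from rfl]
  exact WithTop.coe_le_coe.mpr le_top

lemma contDiff_DD {F : ℝ × ℝ → ℝ} (hF : ContDiff ℝ (⊤:ℕ∞) F) (v : ℝ × ℝ) :
    ContDiff ℝ (⊤:ℕ∞) (DD v F) :=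
  (hF.fderiv_right (m := (⊤:ℕ∞)) cast_le_top').clm_apply contDiff_const

lemma DD_eq {F : ℝ × ℝ → ℝ} (hF : ContDiff ℝ (⊤:ℕ∞) F) (v w : ℝ × ℝ) (p : ℝ × ℝ) :
    DD v (DD w F) p = fderiv ℝ (fderiv ℝ F) p v w := by
  have hd : Differentiable ℝ (fderiv ℝ F) :=
    (hF.fderiv_right (m := (⊤:ℕ∞)) cast_le_top').differentiable (by simp)
  have h2 : fderiv ℝ (fun q => fderiv ℝ F q w) p
      = ((fderiv ℝ F p).comp (fderiv ℝ (fun _ : ℝ × ℝ => w) p))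
        + (fderiv ℝ (fderiv ℝ F) p).flip w := fderiv_clm_apply (hd p) (differentiableAt_const w)
  show fderiv ℝ (fun q => fderiv ℝ F q w) p v = _
  rw [h2]; simp

lemma DD_comm {F : ℝ × ℝ → ℝ} (hF : ContDiff ℝ (⊤:ℕ∞) F) (v w : ℝ × ℝ) (p : ℝ × ℝ) :
    DD v (DD w F) p = DD w (DD v F) p := by
  rw [DD_eq hF, DD_eq hF]
  exact (hF.contDiffAt (x := p)).isSymmSndFDerivAt (n := ((⊤:ℕ∞) : WithTop ℕ∞)) (by simpa [minSmoothness_of_isRCLikeNormedField] using two_le_cast_top) v w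

lemma sliceX_smooth {G : ℝ × ℝ → ℝ} (hG : ContDiff ℝ (⊤:ℕ∞) G) (t : ℝ) :
    ContDiff ℝ (⊤:ℕ∞) (fun x => G (t, x)) := hG.comp (contDiff_const.prodMk contDiff_id)

lemma sliceT_smooth {G : ℝ × ℝ → ℝ} (hG : ContDiff ℝ (⊤:ℕ∞) G) (x : ℝ) :
    ContDiff ℝ (⊤:ℕ∞) (fun s => G (s, x)) := hG.comp (contDiff_id.prodMk contDiff_const)

lemma deriv_sliceX {G : ℝ × ℝ → ℝ} (hG : ContDiff ℝ (⊤:ℕ∞) G) (t x : ℝ) :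
    deriv (fun y => G (t, y)) x = DD (0,1) G (t, x) := by
  have h1 : HasDerivAt (fun y : ℝ => ((t, y) : ℝ × ℝ)) ((0 : ℝ), (1 : ℝ)) x :=
    (hasDerivAt_const x t).prodMk (hasDerivAt_id x)
  have h2 : HasFDerivAt G (fderiv ℝ G (t,x)) (t,x) :=
    ((hG.differentiable (by simp)) (t,x)).hasFDerivAt
  exact (h2.comp_hasDerivAt x h1).deriv

lemma deriv_sliceT {G : ℝ × ℝ → ℝ} (hG : ContDiff ℝ (⊤:ℕ∞) G) (t x : ℝ) :
    deriv (fun s => G (s, x)) t = DD (1,0) G (t, x) := by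
  have h1 : HasDerivAt (fun s : ℝ => ((s, x) : ℝ × ℝ)) ((1 : ℝ), (0 : ℝ)) t :=
    (hasDerivAt_id t).prodMk (hasDerivAt_const t x)
  have h2 : HasFDerivAt G (fderiv ℝ G (t,x)) (t,x) :=
    ((hG.differentiable (by simp)) (t,x)).hasFDerivAt
  exact (h2.comp_hasDerivAt t h1).deriv

lemma onevar (f g : ℝ → ℝ) (hf : ContDiff ℝ (⊤:ℕ∞) f) (hg : ContDiff ℝ (⊤:ℕ∞) g)
    (H : ∀ x, (g x - deriv (deriv g) x)
      + deriv (fun y => Real.sin (f y ^ 2 - deriv f y ^ 2) * (f y - deriv (deriv f) y)) x = 0) :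
    ∀ x, (g x + Real.sin (f x ^ 2 - deriv f x ^ 2) * deriv f x)
      - deriv (deriv (fun y => g y + Real.sin (f y ^ 2 - deriv f y ^ 2) * deriv f y)) x
    = -2 * f x * (Real.cos (f x ^ 2 - deriv f x ^ 2) * (f x - deriv (deriv f) x) * deriv f x)
      - 2 * deriv (fun y => deriv f y *
          (Real.cos (f y ^ 2 - deriv f y ^ 2) * (f y - deriv (deriv f) y) * deriv f y)) x := by
  have hdf : Differentiable ℝ f := hf.differentiable (by simp)
  have hf1 : ContDiff ℝ (⊤:ℕ∞) (deriv f) := (contDiff_infty_iff_deriv.mp hf).2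
  have hdf1 : Differentiable ℝ (deriv f) := hf1.differentiable (by simp)
  have hf2 : ContDiff ℝ (⊤:ℕ∞) (deriv (deriv f)) := (contDiff_infty_iff_deriv.mp hf1).2
  have hdf2 : Differentiable ℝ (deriv (deriv f)) := hf2.differentiable (by simp)
  have hdg : Differentiable ℝ g := hg.differentiable (by simp)
  have hg1 : ContDiff ℝ (⊤:ℕ∞) (deriv g) := (contDiff_infty_iff_deriv.mp hg).2
  have hdg1 : Differentiable ℝ (deriv g) := hg1.differentiable (by simp)
  have d0 : ∀ x, HasDerivAt f (deriv f x) x := fun x => (hdf x).hasDerivAt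
  have d1 : ∀ x, HasDerivAt (deriv f) (deriv (deriv f) x) x := fun x => (hdf1 x).hasDerivAt
  have d2 : ∀ x, HasDerivAt (deriv (deriv f)) (deriv (deriv (deriv f)) x) x :=
    fun x => (hdf2 x).hasDerivAt
  have hW : ∀ x, HasDerivAt (fun y => f y ^ 2 - deriv f y ^ 2)
      (2 * f x * deriv f x - 2 * deriv f x * deriv (deriv f) x) x := by
    intro x
    have := ((d0 x).fun_pow 2).fun_sub ((d1 x).fun_pow 2)
    refine this.congr_deriv ?_
    push_cast; ring
  -- derivative of h := sin(W) * f'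
  have hh : ∀ x, HasDerivAt (fun y => Real.sin (f y ^ 2 - deriv f y ^ 2) * deriv f y)
      (Real.cos (f x ^ 2 - deriv f x ^ 2) * (2 * f x * deriv f x - 2 * deriv f x * deriv (deriv f) x) * deriv f x
        + Real.sin (f x ^ 2 - deriv f x ^ 2) * deriv (deriv f) x) x :=
    fun x => ((hW x).sin).mul (d1 x)
  have Eh : deriv (fun y => Real.sin (f y ^ 2 - deriv f y ^ 2) * deriv f y)
      = fun x => Real.cos (f x ^ 2 - deriv f x ^ 2) * (2 * f x * deriv f x - 2 * deriv f x * deriv (deriv f) x) * deriv f x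
        + Real.sin (f x ^ 2 - deriv f x ^ 2) * deriv (deriv f) x :=
    funext fun x => (hh x).deriv
  intro x
  -- split second derivative of the sum
  have Esum : deriv (fun y => g y + Real.sin (f y ^ 2 - deriv f y ^ 2) * deriv f y)
      = fun z => deriv g z
        + (Real.cos (f z ^ 2 - deriv f z ^ 2) * (2 * f z * deriv f z - 2 * deriv f z * deriv (deriv f) z) * deriv f z
          + Real.sin (f z ^ 2 - deriv f z ^ 2) * deriv (deriv f) z) := by
    funext z
    rw [deriv_fun_add (hdg z) (hh z).differentiableAt, (hh z).deriv]
  rw [Esum]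
  -- hasDerivAt of w' := 2 f f' - 2 f' f''
  have hw' : ∀ z, HasDerivAt (fun y => 2 * f y * deriv f y - 2 * deriv f y * deriv (deriv f) y)
      ((2 * deriv f z * deriv f z + 2 * f z * deriv (deriv f) z)
        - (2 * deriv (deriv f) z * deriv (deriv f) z + 2 * deriv f z * deriv (deriv (deriv f)) z)) z :=
    fun z => (((d0 z).const_mul 2).mul (d1 z)).sub (((d1 z).const_mul 2).mul (d2 z))
  -- hasDerivAt of h1
  have hh1 : HasDerivAt (fun z => Real.cos (f z ^ 2 - deriv f z ^ 2) * (2 * f z * deriv f z - 2 * deriv f z * deriv (deriv f) z) * deriv f z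
        + Real.sin (f z ^ 2 - deriv f z ^ 2) * deriv (deriv f) z)
      (((-Real.sin (f x ^ 2 - deriv f x ^ 2) * (2 * f x * deriv f x - 2 * deriv f x * deriv (deriv f) x))
            * (2 * f x * deriv f x - 2 * deriv f x * deriv (deriv f) x)
          + Real.cos (f x ^ 2 - deriv f x ^ 2)
            * ((2 * deriv f x * deriv f x + 2 * f x * deriv (deriv f) x)
              - (2 * deriv (deriv f) x * deriv (deriv f) x + 2 * deriv f x * deriv (deriv (deriv f)) x))) * deriv f x
        + (Real.cos (f x ^ 2 - deriv f x ^ 2) * (2 * f x * deriv f x - 2 * deriv f x * deriv (deriv f) x)) * deriv (deriv f) x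
        + (Real.cos (f x ^ 2 - deriv f x ^ 2) * (2 * f x * deriv f x - 2 * deriv f x * deriv (deriv f) x) * deriv (deriv f) x
          + Real.sin (f x ^ 2 - deriv f x ^ 2) * deriv (deriv (deriv f)) x)) x :=
    ((((hW x).cos.mul (hw' x)).mul (d1 x)).add (((hW x).sin).mul (d2 x)))
  have E2 : deriv (fun z => deriv g z
        + (Real.cos (f z ^ 2 - deriv f z ^ 2) * (2 * f z * deriv f z - 2 * deriv f z * deriv (deriv f) z) * deriv f z
          + Real.sin (f z ^ 2 - deriv f z ^ 2) * deriv (deriv f) z)) x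
      = deriv (deriv g) x
        + (((-Real.sin (f x ^ 2 - deriv f x ^ 2) * (2 * f x * deriv f x - 2 * deriv f x * deriv (deriv f) x))
            * (2 * f x * deriv f x - 2 * deriv f x * deriv (deriv f) x)
          + Real.cos (f x ^ 2 - deriv f x ^ 2)
            * ((2 * deriv f x * deriv f x + 2 * f x * deriv (deriv f) x)
              - (2 * deriv (deriv f) x * deriv (deriv f) x + 2 * deriv f x * deriv (deriv (deriv f)) x))) * deriv f x
        + (Real.cos (f x ^ 2 - deriv f x ^ 2) * (2 * f x * deriv f x - 2 * deriv f x * deriv (deriv f) x)) * deriv (deriv f) x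
        + (Real.cos (f x ^ 2 - deriv f x ^ 2) * (2 * f x * deriv f x - 2 * deriv f x * deriv (deriv f) x) * deriv (deriv f) x
          + Real.sin (f x ^ 2 - deriv f x ^ 2) * deriv (deriv (deriv f)) x)) := by
    rw [deriv_fun_add (hdg1 x) hh1.differentiableAt, hh1.deriv]
  rw [E2]
  -- RHS derivative
  have hR : HasDerivAt (fun y => deriv f y *
        (Real.cos (f y ^ 2 - deriv f y ^ 2) * (f y - deriv (deriv f) y) * deriv f y))
      (deriv (deriv f) x * (Real.cos (f x ^ 2 - deriv f x ^ 2) * (f x - deriv (deriv f) x) * deriv f x)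
        + deriv f x *
          ((((-Real.sin (f x ^ 2 - deriv f x ^ 2) * (2 * f x * deriv f x - 2 * deriv f x * deriv (deriv f) x))
              * (f x - deriv (deriv f) x)
            + Real.cos (f x ^ 2 - deriv f x ^ 2) * (deriv f x - deriv (deriv (deriv f)) x)) * deriv f x)
            + Real.cos (f x ^ 2 - deriv f x ^ 2) * (f x - deriv (deriv f) x) * deriv (deriv f) x)) x :=
    (d1 x).mul ((((hW x).cos.mul ((d0 x).sub (d2 x))).mul (d1 x)))
  rw [hR.deriv]
  -- rewrite H at x
  have hHx := H x
  rw [(((hW x).sin).fun_mul ((d0 x).fun_sub (d2 x))).deriv] at hHx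
  linear_combination hHx

theorem stmt7 (u : ℝ → ℝ → ℝ) (hu : ContDiff ℝ (⊤ : ℕ∞) (Function.uncurry u))
    (heq : ∀ t x : ℝ, pdt (mF u) t x
      + pdx (fun s y => Real.sin ((u s y) ^ 2 - (pdx u s y) ^ 2) * mF u s y) t x = 0) :
    ∀ t x : ℝ,
      (fun s y => pdt u s y + Real.sin ((u s y) ^ 2 - (pdx u s y) ^ 2) * pdx u s y) t x
        - pdx (pdx (fun s y => pdt u s y
            + Real.sin ((u s y) ^ 2 - (pdx u s y) ^ 2) * pdx u s y)) t x
      = -2 * u t x * MF u t x - 2 * pdx (fun s y => pdx u s y * MF u s y) t x := by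
  intro t x
  have hF : ContDiff ℝ (⊤:ℕ∞) (Function.uncurry u) := hu
  set F : ℝ × ℝ → ℝ := Function.uncurry u with hFdef
  have hf : ContDiff ℝ (⊤:ℕ∞) (u t) := sliceX_smooth hF t
  set g : ℝ → ℝ := fun z => deriv (fun s => u s z) t with hgdef
  -- g as a slice of DD (1,0) F
  have hgeq : g = fun z => DD (1,0) F (t, z) := funext fun z => deriv_sliceT hF t z
  have hg : ContDiff ℝ (⊤:ℕ∞) g := by
    rw [hgeq]; exact sliceX_smooth (contDiff_DD hF (1,0)) t
  -- second x-derivative as DD slice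
  have e2 : ∀ s z, deriv (deriv (u s)) z = DD (0,1) (DD (0,1) F) (s, z) := by
    intro s z
    have e1 : deriv (u s) = fun y => DD (0,1) F (s, y) := funext fun y => deriv_sliceX hF s y
    rw [e1]
    exact deriv_sliceX (contDiff_DD hF (0,1)) s z
  -- Clairaut
  have key : ∀ z, deriv (fun s => deriv (deriv (u s)) z) t = deriv (deriv g) z := by
    intro z
    have l1 : (fun s => deriv (deriv (u s)) z) = fun s => DD (0,1) (DD (0,1) F) (s, z) :=
      funext fun s => e2 s z
    rw [l1, deriv_sliceT (contDiff_DD (contDiff_DD hF (0,1)) (0,1)) t z]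
    have c1 : DD (1,0) (DD (0,1) (DD (0,1) F)) (t,z) = DD (0,1) (DD (1,0) (DD (0,1) F)) (t,z) :=
      DD_comm (contDiff_DD hF (0,1)) _ _ _
    have c2 : DD (1,0) (DD (0,1) F) = DD (0,1) (DD (1,0) F) := funext (DD_comm hF _ _)
    rw [c1, c2]
    have r1 : deriv g = fun y => DD (0,1) (DD (1,0) F) (t, y) := by
      rw [hgeq]
      exact funext fun y => deriv_sliceX (contDiff_DD hF (1,0)) t y
    rw [r1, deriv_sliceX (contDiff_DD (contDiff_DD hF (1,0)) (0,1)) t z]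
  -- the hypothesis in one-variable form
  have H : ∀ z, (g z - deriv (deriv g) z)
      + deriv (fun y => Real.sin ((u t) y ^ 2 - deriv (u t) y ^ 2)
          * ((u t) y - deriv (deriv (u t)) y)) z = 0 := by
    intro z
    have h0 := heq t z
    have hpdt0 : pdt (mF u) t z = deriv (fun s => u s z - deriv (deriv (u s)) z) t := rfl
    have dA : DifferentiableAt ℝ (fun s => u s z) t :=
      ((sliceT_smooth hF z).differentiable (by simp)) t
    have dB : DifferentiableAt ℝ (fun s => deriv (deriv (u s)) z) t := by
      have l1 : (fun s => deriv (deriv (u s)) z) = fun s => DD (0,1) (DD (0,1) F) (s, z) :=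
        funext fun s => e2 s z
      rw [l1]
      exact ((sliceT_smooth (contDiff_DD (contDiff_DD hF (0,1)) (0,1)) z).differentiable
        (by simp)) t
    have hpdt : pdt (mF u) t z = g z - deriv (deriv g) z := by
      rw [hpdt0, deriv_fun_sub dA dB, key z]
    rw [hpdt] at h0
    exact h0
  exact onevar (u t) g hf hg H x
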